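/- Fix k ∈ ℕ, let ω_k > 0 be the unique solution of ω_k·τ + (n+1)·arctan( ω_k/(μ+κ) ) = (2k+1)·π, and let α_k = exp( 1 + (1 + ω_k²/(μ+κ)²)^{(n+1)/2} ) (so that Δ(±i·ω_k, α_k) = 0). Then: (i) the partial derivative of Δ in λ at (i·ω_k, α_k) equals τ + (n+1)/(i·ω_k + μ + κ), whose real part τ + (n+1)(μ+κ)/((μ+κ)² + ω_k²) is strictly positive; (ii) the partial derivative of Δ in α at (i·ω_k, α_k) equals 1/( α_k·(1 − ln α_k) ), which is strictly negative; (iii) there exist ρ_k > 0 and a continuously differentiable map λ̂_k : (α_k − ρ_k, α_k + ρ_k) → ℂ such that λ̂_k(α_k) = i·ω_k, Δ( λ̂_k(α), α ) = 0 for all α ∈ (α_k − ρ_k, α_k + ρ_k), and Re( λ̂_k′(α_k) ) > 0. -/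

import Mathlib

open Filter

open Topology

set_option maxHeartbeats 1000000 in
/-- Transversality at the Hopf bifurcation point: with `ω_k > 0`
solving `ω_k τ + (n+1) arctan(ω_k/(μ+κ)) = (2k+1)π` and
`α_k = exp(1 + (1 + ω_k²/(μ+κ)²)^{(n+1)/2})`, the partial derivative of `Δ` in `λ`
at `(iω_k, α_k)` is `τ + (n+1)/(iω_k + μ + κ)` with strictly positive real part
`τ + (n+1)(μ+κ)/((μ+κ)² + ω_k²)`, the partial derivative in `α` is
`1/(α_k (1 - ln α_k)) < 0`, and there is a local `C¹` branch `λ̂_k` of roots with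
`λ̂_k(α_k) = iω_k` and `Re λ̂_k'(α_k) > 0`. -/
theorem characteristic_transversality
    (μ τ κ : ℝ) (hμ : 0 < μ) (hτ : 0 < τ) (hκ : 0 < κ) (n : ℕ)
    (Δ : ℂ → ℝ → ℂ)
    (hΔ : ∀ (lam : ℂ) (a : ℝ),
      Δ lam a = 1 - ((1 : ℂ) - (Real.log a : ℂ)) * Complex.exp (-lam * (τ : ℂ))
        * ((1 : ℂ) + lam / ((μ : ℂ) + (κ : ℂ))) ^ (-((n : ℤ) + 1)))
    (k : ℕ) (ωk : ℝ) (hωk : 0 < ωk)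
    (hωkeq : ωk * τ + ((n : ℝ) + 1) * Real.arctan (ωk / (μ + κ))
      = (2 * (k : ℝ) + 1) * Real.pi)
    (αk : ℝ)
    (hαk : αk = Real.exp (1 + (1 + ωk ^ 2 / (μ + κ) ^ 2) ^ (((n : ℝ) + 1) / 2))) :
    -- (i) partial derivative in λ
    (HasDerivAt (fun lam : ℂ => Δ lam αk)
        ((τ : ℂ) + ((n : ℂ) + 1) / (Complex.I * (ωk : ℂ) + (μ : ℂ) + (κ : ℂ)))
        (Complex.I * (ωk : ℂ)) ∧
      ((τ : ℂ) + ((n : ℂ) + 1) / (Complex.I * (ωk : ℂ) + (μ : ℂ) + (κ : ℂ))).re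
        = τ + ((n : ℝ) + 1) * (μ + κ) / ((μ + κ) ^ 2 + ωk ^ 2) ∧
      0 < τ + ((n : ℝ) + 1) * (μ + κ) / ((μ + κ) ^ 2 + ωk ^ 2)) ∧
    -- (ii) partial derivative in α
    (HasDerivAt (fun a : ℝ => Δ (Complex.I * (ωk : ℂ)) a)
        ((1 : ℂ) / ((αk : ℂ) * ((1 : ℂ) - (Real.log αk : ℂ)))) αk ∧
      1 / (αk * (1 - Real.log αk)) < 0) ∧
    -- (iii) local C¹ branch of roots with transversality
    (∃ ρ > (0:ℝ), ∃ lamhat : ℝ → ℂ,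
      ContDiffOn ℝ 1 lamhat (Set.Ioo (αk - ρ) (αk + ρ)) ∧
      lamhat αk = Complex.I * (ωk : ℂ) ∧
      (∀ a ∈ Set.Ioo (αk - ρ) (αk + ρ), Δ (lamhat a) a = 0) ∧
      0 < (deriv lamhat αk).re) := by

  have hm : (0:ℝ) < μ + κ := by linarith
  have hαpos : 0 < αk := by rw [hαk]; exact Real.exp_pos _
  have hΔfun : Δ = fun lam a => 1 - ((1 : ℂ) - (Real.log a : ℂ)) * Complex.exp (-lam * (τ : ℂ))
        * ((1 : ℂ) + lam / ((μ : ℂ) + (κ : ℂ))) ^ (-((n : ℤ) + 1)) :=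
    funext fun l => funext fun a => hΔ l a
  subst hΔfun
  beta_reduce
  set M : ℂ := (μ:ℂ) + (κ:ℂ) with hMdef
  set l₀ : ℂ := Complex.I * (ωk:ℂ) with hl₀def
  set S : ℂ := l₀ + (μ:ℂ) + (κ:ℂ) with hSdef
  set z : ℂ := 1 + l₀ / M with hzdef
  set H : ℂ → ℂ := fun l => Complex.exp (-l * (τ:ℂ)) * ((1:ℂ) + l / M) ^ (-((n:ℤ)+1))
    with hHdef
  set C : ℂ := 1 - (Real.log αk : ℂ) with hCdef2
  set dd : ℂ := (τ:ℂ) + ((n:ℂ)+1)/S with hdddef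
  set x : ℝ := ωk / (μ + κ) with hx
  set r : ℝ := Real.sqrt (1 + x ^ 2) with hr
  have hrpos : 0 < r := Real.sqrt_pos.2 (by positivity)
  set θ : ℝ := Real.arctan x with hθ
  -- the value of log αk
  have hxsq : x ^ 2 = ωk ^ 2 / (μ + κ) ^ 2 := by rw [hx, div_pow]
  have hlog : Real.log αk = 1 + r ^ (n + 1) := by
    rw [hαk, Real.log_exp, hr, hxsq]
    congr 1
    rw [Real.sqrt_eq_rpow, ← Real.rpow_natCast ((1 + ωk ^ 2 / (μ + κ) ^ 2) ^ ((1:ℝ)/2)) (n+1),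
      ← Real.rpow_mul (by positivity)]
    congr 1
    push_cast
    ring
  have hCreal : 1 - Real.log αk = -(r ^ (n+1)) := by rw [hlog]; ring
  have hC : C = -((r ^ (n+1) : ℝ) : ℂ) := by rw [hCdef2, hlog]; push_cast; ring
  have hC0 : C ≠ 0 := by
    rw [hC]
    exact neg_ne_zero.2 (Complex.ofReal_ne_zero.2 (pow_ne_zero _ hrpos.ne'))
  -- polar form of z
  have hzpolar : z = (r : ℂ) * Complex.exp ((θ:ℂ) * Complex.I) := by
    rw [hzdef, hl₀def, hMdef, Complex.exp_mul_I]
    have h1 : Real.cos θ = 1 / r := by rw [hθ, hr]; exact Real.cos_arctan x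
    have h2 : Real.sin θ = x / r := by rw [hθ, hr]; exact Real.sin_arctan x
    have hmc : ((μ:ℂ) + κ) = ((μ + κ : ℝ) : ℂ) := by push_cast; ring
    rw [hmc, ← Complex.ofReal_cos, ← Complex.ofReal_sin, h1, h2]
    have hmc0 : ((μ + κ : ℝ) : ℂ) ≠ 0 := Complex.ofReal_ne_zero.2 hm.ne'
    have hrc : (r : ℂ) ≠ 0 := Complex.ofReal_ne_zero.2 hrpos.ne'
    field_simp
    rw [hx]
    push_cast
    have hmc1 : (μ:ℂ) + κ ≠ 0 := by exact_mod_cast hmc0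
    field_simp
  have hz0 : z ≠ 0 := by
    rw [hzpolar]
    exact mul_ne_zero (Complex.ofReal_ne_zero.2 hrpos.ne') (Complex.exp_ne_zero _)
  have hM0 : M ≠ 0 := by
    rw [hMdef, show (μ:ℂ) + κ = ((μ + κ : ℝ):ℂ) by push_cast; ring]
    exact Complex.ofReal_ne_zero.2 hm.ne'
  have hSmz : M * z = S := by
    rw [hzdef, hSdef, hMdef, hl₀def]
    have hM0' : (μ:ℂ) + κ ≠ 0 := hM0
    field_simp
    ring
  have hS0 : S ≠ 0 := hSmz ▸ mul_ne_zero hM0 hz0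
  -- the key root identity
  have hexpkey : Complex.exp (-l₀ * τ) * Complex.exp ((θ:ℂ) * Complex.I) ^ (-((n:ℤ)+1))
      = -1 := by
    rw [← Complex.exp_int_mul, ← Complex.exp_add]
    have h3 : -l₀ * (τ:ℂ) + ((-((n:ℤ)+1) : ℤ) : ℂ) * ((θ:ℂ) * Complex.I)
        = (-((ωk * τ + ((n:ℝ)+1) * θ) : ℝ) : ℂ) * Complex.I := by
      rw [hl₀def]; push_cast; ring
    rw [h3, hωkeq]
    have h2k : Complex.exp (-(k:ℂ) * (2 * Real.pi * Complex.I)) = 1 := by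
      have h := Complex.exp_int_mul_two_pi_mul_I (-(k:ℤ))
      push_cast at h
      exact h
    have h4 : -(((2 * (k:ℝ) + 1) * Real.pi : ℝ) : ℂ) * Complex.I
        = -(k:ℂ) * (2 * Real.pi * Complex.I) + -(Real.pi : ℂ) * Complex.I := by
      push_cast; ring
    rw [h4, Complex.exp_add, h2k, one_mul, neg_mul, Complex.exp_neg, Complex.exp_pi_mul_I]
    norm_num
  have hkey : C * H l₀ = 1 := by
    have hHl : H l₀ = Complex.exp (-l₀ * (τ:ℂ)) * z ^ (-((n:ℤ)+1)) := rfl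
    rw [hHl, hC, hzpolar, mul_zpow]
    have hcast : ((n:ℤ)+1) = ((n+1:ℕ):ℤ) := by push_cast; ring
    have hrz : ((r:ℂ)) ^ (-((n:ℤ)+1)) = ((r ^ (n+1) : ℝ) : ℂ)⁻¹ := by
      rw [zpow_neg, hcast, zpow_natCast, Complex.ofReal_pow]
    rw [hrz]
    have hpow : ((r ^ (n+1) : ℝ) : ℂ) ≠ 0 :=
      Complex.ofReal_ne_zero.2 (pow_ne_zero _ hrpos.ne')
    have hinv : ((r ^ (n+1) : ℝ) : ℂ) * ((r ^ (n+1) : ℝ) : ℂ)⁻¹ = 1 := mul_inv_cancel₀ hpow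
    linear_combination (-(Complex.exp (-l₀ * (τ:ℂ))
        * Complex.exp ((θ:ℂ) * Complex.I) ^ (-((n:ℤ)+1)))) * hinv - hexpkey
  -- derivative of H
  have hw : HasDerivAt (fun l : ℂ => 1 + l / M) M⁻¹ l₀ := by
    simpa [one_div] using ((hasDerivAt_id l₀).div_const M).const_add (1:ℂ)
  have hzp : HasDerivAt (fun l : ℂ => ((1:ℂ) + l / M) ^ (-((n:ℤ)+1)))
      (((-((n:ℤ)+1) : ℤ) : ℂ) * z ^ (-((n:ℤ)+1) - 1) * M⁻¹) l₀ := by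
    have := (hasDerivAt_zpow (-((n:ℤ)+1)) z (Or.inl hz0)).comp l₀ hw
    exact this
  have hex : HasDerivAt (fun l : ℂ => Complex.exp (-l * τ))
      (Complex.exp (-l₀ * τ) * (-τ)) l₀ := by
    have h1 : HasDerivAt (fun l : ℂ => -l * (τ:ℂ)) (-τ) l₀ := by
      simpa using ((hasDerivAt_id l₀).neg.mul_const (τ:ℂ))
    simpa using h1.cexp
  have hH' : HasDerivAt H (-dd * H l₀) l₀ := by
    have hd := hex.mul hzp
    refine hd.congr_deriv (Eq.symm ?_)
    have hHl : H l₀ = Complex.exp (-l₀ * τ) * z ^ (-((n:ℤ)+1)) := rfl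
    rw [hHl, hdddef, ← hzdef, zpow_sub_one₀ hz0, ← hSmz]
    push_cast
    field_simp
    ring
  -- part (i) : derivative in λ
  have hpart1 : HasDerivAt
      (fun lam : ℂ => 1 - C * Complex.exp (-lam * (τ : ℂ))
        * ((1 : ℂ) + lam / M) ^ (-((n : ℤ) + 1))) dd l₀ := by
    have hfull := (hH'.const_mul C).const_sub (1:ℂ)
    have hfun : (fun lam : ℂ => 1 - C * Complex.exp (-lam * (τ : ℂ))
          * ((1 : ℂ) + lam / M) ^ (-((n : ℤ) + 1)))
        = fun lam => 1 - C * H lam := by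
      funext l
      rw [hHdef]
      ring
    rw [hfun]
    refine hfull.congr_deriv (Eq.symm ?_)
    linear_combination (-dd) * hkey
  -- real part of dd
  have hre : dd.re = τ + ((n : ℝ) + 1) * (μ + κ) / ((μ + κ) ^ 2 + ωk ^ 2) := by
    rw [hdddef, hSdef, hl₀def]
    rw [Complex.add_re, Complex.div_re]
    simp only [Complex.add_re, Complex.add_im, Complex.mul_re, Complex.mul_im,
      Complex.I_re, Complex.I_im, Complex.ofReal_re, Complex.ofReal_im,
      Complex.one_re, Complex.one_im, Complex.normSq_apply, Complex.natCast_re,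
      Complex.natCast_im]
    have hden : (μ + κ) ^ 2 + ωk ^ 2 ≠ 0 := by positivity
    field_simp
    ring
  have hrepos : 0 < τ + ((n : ℝ) + 1) * (μ + κ) / ((μ + κ) ^ 2 + ωk ^ 2) := by positivity
  have hd0 : dd ≠ 0 := by
    intro h
    have h1 : dd.re = τ + ((n:ℝ)+1)*(μ+κ)/((μ+κ)^2 + ωk^2) := hre
    rw [h] at h1
    simp only [Complex.zero_re] at h1
    exact absurd h1.symm (ne_of_gt hrepos)
  -- part (ii) : derivative in α
  have hufd : HasDerivAt (fun a : ℝ => (1:ℂ) - (Real.log a : ℂ)) (-((αk:ℂ)⁻¹)) αk := by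
    have h := ((Real.hasDerivAt_log hαpos.ne').ofReal_comp).const_sub (1:ℂ)
    simpa using h
  have hH0val : H l₀ = C⁻¹ := by
    field_simp
    linear_combination hkey
  have hpart2 : HasDerivAt
      (fun a : ℝ => 1 - ((1:ℂ) - (Real.log a : ℂ)) * Complex.exp (-l₀ * (τ : ℂ))
        * z ^ (-((n : ℤ) + 1))) ((1 : ℂ) / ((αk : ℂ) * C)) αk := by
    have h1 : HasDerivAt (fun a : ℝ => ((1:ℂ) - (Real.log a : ℂ)) * H l₀)
        ((-((αk:ℂ)⁻¹)) * H l₀) αk := hufd.mul_const (H l₀)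
    have h2 := h1.const_sub (1:ℂ)
    have hfun : (fun a : ℝ => 1 - ((1:ℂ) - (Real.log a : ℂ)) * Complex.exp (-l₀ * (τ : ℂ))
          * z ^ (-((n : ℤ) + 1))) = fun a : ℝ => 1 - ((1:ℂ) - (Real.log a : ℂ)) * H l₀ := by
      funext a
      have hHl : H l₀ = Complex.exp (-l₀ * (τ:ℂ)) * z ^ (-((n:ℤ)+1)) := rfl
      rw [hHl]
      ring
    rw [hfun]
    refine h2.congr_deriv (Eq.symm ?_)
    rw [hH0val, one_div, mul_inv]
    ring
  set c : ℝ := 1 / (αk * (1 - Real.log αk)) with hcdef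
  have hsign : c < 0 := by
    rw [hcdef, hCreal]
    exact div_neg_of_pos_of_neg one_pos
      (mul_neg_of_pos_of_neg hαpos (neg_lt_zero.2 (pow_pos hrpos _)))
  have hch : ((αk:ℂ))⁻¹ * H l₀ = ((c:ℝ):ℂ) := by
    rw [hH0val, hcdef, hCdef2]
    push_cast
    rw [one_div, mul_inv]
  -- the continuous linear equivalence for the IFT
  set T2 : ℝ × ℂ →L[ℝ] ℂ :=
    (((c:ℂ) • Complex.ofRealCLM).comp (ContinuousLinearMap.fst ℝ ℝ ℂ)) +
      ((dd • ((ContinuousLinearMap.id ℂ ℂ).restrictScalars ℝ)).comp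
        (ContinuousLinearMap.snd ℝ ℝ ℂ)) with hT2
  set T : ℝ × ℂ →L[ℝ] ℝ × ℂ := (ContinuousLinearMap.fst ℝ ℝ ℂ).prod T2 with hT
  set J2 : ℝ × ℂ →L[ℝ] ℂ :=
    (((-(c:ℂ)/dd) • Complex.ofRealCLM).comp (ContinuousLinearMap.fst ℝ ℝ ℂ)) +
      ((dd⁻¹ • ((ContinuousLinearMap.id ℂ ℂ).restrictScalars ℝ)).comp
        (ContinuousLinearMap.snd ℝ ℝ ℂ)) with hJ2
  set J : ℝ × ℂ →L[ℝ] ℝ × ℂ := (ContinuousLinearMap.fst ℝ ℝ ℂ).prod J2 with hJ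
  have hTapp : ∀ p : ℝ × ℂ, T p = (p.1, (c:ℂ) * (p.1:ℝ) + dd * p.2) := by
    intro p
    rw [hT, hT2]
    simp [smul_eq_mul]
  have hJapp : ∀ p : ℝ × ℂ, J p = (p.1, (-(c:ℂ)/dd) * (p.1:ℝ) + dd⁻¹ * p.2) := by
    intro p
    rw [hJ, hJ2]
    simp [smul_eq_mul]
  have hJT : Function.LeftInverse J T := by
    intro p
    rw [hTapp, hJapp]
    refine Prod.ext rfl ?_
    show (-(c:ℂ)/dd) * ((p.1:ℝ):ℂ) + dd⁻¹ * ((c:ℂ) * (p.1:ℝ) + dd * p.2) = p.2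
    field_simp
    ring
  have hTJ : Function.RightInverse J T := by
    intro p
    rw [hJapp, hTapp]
    refine Prod.ext rfl ?_
    show (c:ℂ) * ((p.1:ℝ):ℂ) + dd * ((-(c:ℂ)/dd) * (p.1:ℝ) + dd⁻¹ * p.2) = p.2
    field_simp
    ring
  set e : (ℝ × ℂ) ≃L[ℝ] (ℝ × ℂ) := ContinuousLinearEquiv.equivOfInverse T J hJT hTJ
    with hedef
  -- the map Φ
  set Φ : ℝ × ℂ → ℝ × ℂ :=
    fun p => (p.1, 1 - ((1:ℂ) - (Real.log p.1 : ℂ)) * H p.2) with hΦdef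
  set p₀ : ℝ × ℂ := (αk, l₀) with hp₀def
  have hA : HasFDerivAt (fun p : ℝ × ℂ => (1:ℂ) - (Real.log p.1 : ℂ))
      ((ContinuousLinearMap.smulRight (1 : ℝ →L[ℝ] ℝ) (-((αk:ℂ)⁻¹))).comp
        (ContinuousLinearMap.fst ℝ ℝ ℂ)) p₀ :=
    hufd.hasFDerivAt.comp (x := p₀) (hasFDerivAt_fst (𝕜 := ℝ) (E := ℝ) (F := ℂ) (p := p₀))
  have hB : HasFDerivAt (fun p : ℝ × ℂ => H p.2)
      (((ContinuousLinearMap.smulRight (1 : ℂ →L[ℂ] ℂ) (-dd * H l₀)).restrictScalars ℝ).comp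
        (ContinuousLinearMap.snd ℝ ℝ ℂ)) p₀ :=
    HasFDerivAt.comp (x := p₀) (g := H) (hH'.hasFDerivAt.restrictScalars ℝ) (hasFDerivAt_snd (𝕜 := ℝ) (E := ℝ) (F := ℂ) (p := p₀))
  have hΦfd : HasFDerivAt Φ T p₀ := by
    have hcomb := HasFDerivAt.prodMk hasFDerivAt_fst ((hA.mul hB).const_sub (1:ℂ))
    have hTeq : (ContinuousLinearMap.fst ℝ ℝ ℂ).prod
        (-(((1:ℂ) - (Real.log p₀.1 : ℂ)) •
            (((ContinuousLinearMap.smulRight (1 : ℂ →L[ℂ] ℂ) (-dd * H l₀)).restrictScalars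
              ℝ).comp (ContinuousLinearMap.snd ℝ ℝ ℂ)) +
          H p₀.2 • ((ContinuousLinearMap.smulRight (1 : ℝ →L[ℝ] ℝ) (-((αk:ℂ)⁻¹))).comp
            (ContinuousLinearMap.fst ℝ ℝ ℂ)))) = T := by
      apply ContinuousLinearMap.ext
      intro p
      refine Prod.ext rfl ?_
      rw [hTapp]
      show -(((1:ℂ) - (Real.log p₀.1 : ℂ)) * (p.2 • (-dd * H l₀))
          + H p₀.2 * (p.1 • (-((αk:ℂ)⁻¹)))) = (c:ℂ) * (p.1:ℝ) + dd * p.2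
      have h1 : p₀.1 = αk := rfl
      have h2 : p₀.2 = l₀ := rfl
      rw [h1, h2, Complex.real_smul, smul_eq_mul, ← hCdef2]
      linear_combination p.2 * dd * hkey + ((p.1 : ℝ):ℂ) * hch
    rw [← hTeq]
    exact hcomb
  have hΦe : HasFDerivAt Φ ((e : (ℝ × ℂ) ≃L[ℝ] (ℝ × ℂ)) :
      (ℝ × ℂ) →L[ℝ] (ℝ × ℂ)) p₀ := hΦfd
  -- smoothness of Φ
  have hcdu : ContDiffAt ℝ 1 (fun a : ℝ => (1:ℂ) - (Real.log a : ℂ)) αk := by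
    refine contDiffAt_const.sub ?_
    exact ContDiffAt.comp αk Complex.ofRealCLM.contDiff.contDiffAt
      (Real.contDiffAt_log.mpr hαpos.ne')
  have hcdH : ContDiffAt ℝ 1 H l₀ := by
    have hzpowfun : H = fun l : ℂ => Complex.exp (-l * (τ:ℂ))
        * (((1:ℂ) + l / M) ^ (n+1))⁻¹ := by
      funext l
      simp only [hHdef]
      have : ∀ w : ℂ, w ^ (-((n:ℤ)+1)) = (w ^ (n+1))⁻¹ := fun w => by
        rw [show -((n:ℤ)+1) = -((n+1:ℕ):ℤ) by push_cast; ring, zpow_neg, zpow_natCast]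
      rw [this]
    have h1 : ContDiffAt ℂ 1 H l₀ := by
      rw [hzpowfun]
      refine ContDiffAt.mul ?_ ?_
      · exact (Complex.contDiff_exp.comp ((contDiff_id.neg).mul contDiff_const)).contDiffAt
      · refine ContDiffAt.inv ?_ (pow_ne_zero _ hz0)
        exact ((contDiff_const.add (contDiff_id.div_const M)).pow (n+1)).contDiffAt
    exact h1.restrict_scalars ℝ
  have hΦcd : ContDiffAt ℝ 1 Φ p₀ := by
    refine ContDiffAt.prodMk contDiffAt_fst ?_
    refine contDiffAt_const.sub ?_
    exact ContDiffAt.mul (hcdu.comp (f := Prod.fst) p₀ contDiffAt_fst) (hcdH.comp (f := Prod.snd) p₀ contDiffAt_snd)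
  -- the local inverse
  have hn1 : (1 : WithTop ℕ∞) ≠ 0 := one_ne_zero
  set ψ : ℝ × ℂ → ℝ × ℂ := hΦcd.localInverse hΦe hn1 with hψdef
  have hΦp₀ : Φ p₀ = (αk, (0:ℂ)) := by
    rw [hΦdef]
    refine Prod.ext rfl ?_
    show 1 - ((1:ℂ) - (Real.log αk : ℂ)) * H l₀ = 0
    rw [← hCdef2]
    linear_combination -hkey
  have hψp₀ : ψ (αk, 0) = p₀ := by
    rw [← hΦp₀]
    exact hΦcd.localInverse_apply_image hΦe hn1
  have hψcd : ContDiffAt ℝ 1 ψ ((αk, 0) : ℝ × ℂ) := by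
    have := hΦcd.to_localInverse hΦe hn1
    rwa [hΦp₀] at this
  have hrinv : ∀ᶠ y in 𝓝 ((αk, (0:ℂ)) : ℝ × ℂ), Φ (ψ y) = y := by
    have := (hΦcd.hasStrictFDerivAt' hΦe hn1).eventually_right_inverse
    rwa [hΦp₀] at this
  set lamhat : ℝ → ℂ := fun a => (ψ (a, 0)).2 with hlamdef
  have hι : Filter.Tendsto (fun a : ℝ => ((a, (0:ℂ)) : ℝ × ℂ)) (𝓝 αk) (𝓝 ((αk, 0) : ℝ × ℂ)) :=
    (continuous_id.prodMk continuous_const).tendsto αk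
  have hev : ∀ᶠ a in 𝓝 αk, Φ (ψ (a, 0)) = ((a, 0) : ℝ × ℂ) := hι.eventually hrinv
  have hroot : ∀ᶠ a in 𝓝 αk, 1 - ((1:ℂ) - (Real.log a : ℂ)) * H (lamhat a) = 0 := by
    refine hev.mono fun a ha => ?_
    have h1 : (Φ (ψ (a, 0))).1 = a := by rw [ha]
    have h2 : (Φ (ψ (a, 0))).2 = 0 := by rw [ha]
    have h1' : (ψ ((a:ℝ), (0:ℂ))).1 = a := h1
    have h2' : 1 - ((1:ℂ) - (Real.log (ψ ((a:ℝ), (0:ℂ))).1 : ℂ)) * H (ψ ((a:ℝ), (0:ℂ))).2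
        = 0 := h2
    rw [h1'] at h2'
    exact h2'
  have hlamαk : lamhat αk = l₀ := congrArg Prod.snd hψp₀
  have hlamcd : ContDiffAt ℝ 1 lamhat αk := by
    have hcι : ContDiffAt ℝ 1 (fun a : ℝ => ((a, (0:ℂ)) : ℝ × ℂ)) αk :=
      ContDiffAt.prodMk contDiffAt_id contDiffAt_const
    have h1 := hψcd.comp αk hcι
    exact contDiffAt_snd.comp αk h1
  have hevcd : ∀ᶠ aa in 𝓝 αk, ContDiffAt ℝ 1 lamhat aa := hlamcd.eventually (by simp)
  have hdiff : DifferentiableAt ℝ lamhat αk := hlamcd.differentiableAt one_ne_zero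
  have hlamder : HasDerivAt lamhat (deriv lamhat αk) αk := hdiff.hasDerivAt
  -- compute the derivative of lamhat at αk
  have hH2 : HasFDerivAt H
      ((ContinuousLinearMap.smulRight (1 : ℂ →L[ℂ] ℂ) (-dd * H l₀)).restrictScalars ℝ)
      (lamhat αk) := by
    rw [hlamαk]
    exact hH'.hasFDerivAt.restrictScalars ℝ
  have hHcomp : HasDerivAt (fun a : ℝ => H (lamhat a))
      ((deriv lamhat αk) • (-dd * H l₀)) αk := by
    have := hH2.comp_hasDerivAt αk hlamder
    refine this.congr_deriv ?_
    simp
  have hprod : HasDerivAt (fun a : ℝ => 1 - ((1:ℂ) - (Real.log a : ℂ)) * H (lamhat a))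
      (-((-((αk:ℂ)⁻¹)) * H (lamhat αk)
        + ((1:ℂ) - (Real.log αk : ℂ)) * ((deriv lamhat αk) • (-dd * H l₀)))) αk :=
    (hufd.mul hHcomp).const_sub (1:ℂ)
  have hzeroD : HasDerivAt (fun a : ℝ => 1 - ((1:ℂ) - (Real.log a : ℂ)) * H (lamhat a))
      0 αk :=
    (hasDerivAt_const αk (0:ℂ)).congr_of_eventuallyEq hroot
  have hDeq := hprod.unique hzeroD
  rw [hlamαk, smul_eq_mul, ← hCdef2] at hDeq
  have hkeyC : C * H l₀ = 1 := hkey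
  have hlveq : deriv lamhat αk = -((c:ℝ):ℂ) / dd := by
    rw [eq_div_iff hd0]
    linear_combination hDeq - (deriv lamhat αk * dd) * hkeyC - hch
  have hdrepos : 0 < (deriv lamhat αk).re := by
    rw [hlveq]
    have h5 : -((c:ℝ):ℂ) / dd = ((-c : ℝ) : ℂ) * dd⁻¹ := by push_cast; ring
    rw [h5, Complex.re_ofReal_mul, Complex.inv_re]
    refine mul_pos (by linarith) (div_pos ?_ ?_)
    · rw [hre]; exact hrepos
    · exact Complex.normSq_pos.2 hd0
  -- select the radius
  obtain ⟨ε, hε0, hballP⟩ := Metric.eventually_nhds_iff_ball.1 (hevcd.and hroot)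
  refine ⟨⟨hpart1, hre, hrepos⟩, ⟨hpart2, hsign⟩, ⟨ε, hε0, lamhat, ?_, hlamαk, ?_, hdrepos⟩⟩
  · rw [← Real.ball_eq_Ioo]
    intro a ha
    exact ((hballP a ha).1).contDiffWithinAt
  · rw [← Real.ball_eq_Ioo]
    intro a ha
    have h6 := (hballP a ha).2
    have hHl : H (lamhat a) = Complex.exp (-(lamhat a) * (τ:ℂ))
        * ((1:ℂ) + (lamhat a) / M) ^ (-((n:ℤ)+1)) := rfl
    rw [hHl] at h6
    linear_combination h6
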